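/- For every natural number n there exist constants C > 0 and λ₀ > 0 such that for all real λ ≥ λ₀, the finite sum over natural numbers l with √λ ≤ λ − l (equivalently l ≤ λ − √λ) satisfies |∑_{0 ≤ l ≤ λ−√λ} l^n/(λ − l) − λ^n·(log λ)/2| ≤ C·λ^n. -/

import Mathlib

lemma log_sub_log_le' {a b : ℝ} (hb : 0 < b) (hab : b ≤ a) :
    Real.log a - Real.log b ≤ (a - b) / b := by
  have ha : 0 < a := lt_of_lt_of_le hb hab
  have h := Real.log_le_sub_one_of_pos (show 0 < a / b from div_pos ha hb)
  rw [Real.log_div ha.ne' hb.ne'] at h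
  have : a / b - 1 = (a - b) / b := by field_simp
  linarith

lemma log_sub_log_ge' {a b : ℝ} (hb : 0 < b) (hab : b ≤ a) :
    (a - b) / a ≤ Real.log a - Real.log b := by
  have ha : 0 < a := lt_of_lt_of_le hb hab
  have h := Real.log_le_sub_one_of_pos (show 0 < b / a from div_pos hb ha)
  rw [Real.log_div hb.ne' ha.ne'] at h
  have : b / a - 1 = -((a - b) / a) := by field_simp; ring
  linarith

lemma pow_sub_pow_le_aux (m : ℕ) {x y : ℝ} (hy : 0 ≤ y) (hxy : y ≤ x) :
    x ^ (m + 1) - y ^ (m + 1) ≤ (m + 1) * x ^ m * (x - y) := by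
  induction m with
  | zero => simp
  | succ k ih =>
    have hx : 0 ≤ x := hy.trans hxy
    have h2 : y ^ (k + 1) ≤ x ^ (k + 1) := pow_le_pow_left₀ hy hxy _
    have h3 := mul_le_mul_of_nonneg_left ih hx
    have h4 : (x - y) * y ^ (k + 1) ≤ (x - y) * x ^ (k + 1) :=
      mul_le_mul_of_nonneg_left h2 (by linarith)
    have h1 : x ^ (k + 2) - y ^ (k + 2)
        = x * (x ^ (k + 1) - y ^ (k + 1)) + (x - y) * y ^ (k + 1) := by ring
    have h5 : x * ((k + 1 : ℝ) * x ^ k * (x - y)) = (k + 1 : ℝ) * x ^ (k + 1) * (x - y) := by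
      ring
    push_cast
    nlinarith [pow_nonneg hx (k + 1)]

/-- For every natural `n` there are constants `C > 0`, `λ₀ > 0` such that for all
`λ ≥ λ₀`, the finite sum over naturals `l ≤ λ − √λ` satisfies
`|∑_{0 ≤ l ≤ λ−√λ} l^n/(λ − l) − λ^n·(log λ)/2| ≤ C·λ^n`. -/
theorem body_log_sum (n : ℕ) :
    ∃ C > (0 : ℝ), ∃ lam₀ > (0 : ℝ), ∀ lam : ℝ, lam₀ ≤ lam →
      |(∑ l ∈ Finset.range (⌊lam - Real.sqrt lam⌋₊ + 1), (l : ℝ) ^ n / (lam - (l : ℝ)))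
          - lam ^ n * Real.log lam / 2|
        ≤ C * lam ^ n := by
  refine ⟨n + 1, by positivity, 4, by norm_num, fun lam hlam => ?_⟩
  have hlam0 : (0 : ℝ) < lam := by linarith
  set s := Real.sqrt lam with hsdef
  have hs2 : 2 ≤ s := by
    have h4 : Real.sqrt 4 = 2 := by
      rw [show (4 : ℝ) = 2 ^ 2 by norm_num, Real.sqrt_sq (by norm_num)]
    calc (2 : ℝ) = Real.sqrt 4 := h4.symm
      _ ≤ s := Real.sqrt_le_sqrt hlam
  have hssq : s * s = lam := Real.mul_self_sqrt hlam0.le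
  have hsle : s ≤ lam - s := by nlinarith
  set M := ⌊lam - s⌋₊ with hMdef
  have hMle : (M : ℝ) ≤ lam - s := Nat.floor_le (by linarith)
  have hMgt : lam - s < M + 1 := Nat.lt_floor_add_one _
  have h1 : s ≤ lam - M := by linarith
  have h2 : lam - M ≤ s + 1 := by linarith
  -- for each l in range, λ - l ≥ s
  have hterm : ∀ l ∈ Finset.range (M + 1), s ≤ lam - (l : ℝ) := by
    intro l hl
    have : (l : ℝ) ≤ M := by
      exact_mod_cast Nat.cast_le.mpr (Nat.lt_succ_iff.mp (Finset.mem_range.mp hl))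
    linarith
  set T : ℝ := ∑ l ∈ Finset.range (M + 1), 1 / (lam - (l : ℝ)) with hTdef
  -- upper bound on T
  have hTle : T ≤ Real.log lam - Real.log (lam - (M + 1 : ℕ)) := by
    have := Finset.sum_range_sub' (fun l : ℕ => Real.log (lam - (l : ℝ))) (M + 1)
    calc T ≤ ∑ l ∈ Finset.range (M + 1),
          (Real.log (lam - (l : ℝ)) - Real.log (lam - ((l + 1 : ℕ) : ℝ))) := by
          refine Finset.sum_le_sum fun l hl => ?_
          have hl1 : s ≤ lam - (l : ℝ) := hterm l hl
          have hb : (0 : ℝ) < lam - ((l + 1 : ℕ) : ℝ) := by push_cast; linarith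
          have := log_sub_log_ge' hb (by push_cast; linarith :
            lam - ((l + 1 : ℕ) : ℝ) ≤ lam - (l : ℝ))
          have heq : (lam - (l : ℝ) - (lam - ((l + 1 : ℕ) : ℝ))) / (lam - (l : ℝ))
              = 1 / (lam - (l : ℝ)) := by push_cast; ring_nf
          linarith [heq ▸ this]
      _ = Real.log (lam - ((0 : ℕ) : ℝ)) - Real.log (lam - ((M + 1 : ℕ) : ℝ)) := this
      _ = Real.log lam - Real.log (lam - (M + 1 : ℕ)) := by norm_num
  -- lower bound on T
  have hTge : Real.log (lam + 1 - ((0 : ℕ) : ℝ)) - Real.log (lam + 1 - ((M + 1 : ℕ) : ℝ)) ≤ T := by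
    have := Finset.sum_range_sub' (fun l : ℕ => Real.log (lam + 1 - (l : ℝ))) (M + 1)
    calc Real.log (lam + 1 - ((0 : ℕ) : ℝ)) - Real.log (lam + 1 - ((M + 1 : ℕ) : ℝ))
        = ∑ l ∈ Finset.range (M + 1),
          (Real.log (lam + 1 - (l : ℝ)) - Real.log (lam + 1 - ((l + 1 : ℕ) : ℝ))) := this.symm
      _ ≤ T := by
          refine Finset.sum_le_sum fun l hl => ?_
          have hl1 : s ≤ lam - (l : ℝ) := hterm l hl
          have hb : (0 : ℝ) < lam + 1 - ((l + 1 : ℕ) : ℝ) := by push_cast; linarith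
          have := log_sub_log_le' hb (by push_cast; linarith :
            lam + 1 - ((l + 1 : ℕ) : ℝ) ≤ lam + 1 - (l : ℝ))
          have heq : (lam + 1 - (l : ℝ) - (lam + 1 - ((l + 1 : ℕ) : ℝ)))
              / (lam + 1 - ((l + 1 : ℕ) : ℝ)) = 1 / (lam - (l : ℝ)) := by
            push_cast; ring_nf
          linarith [heq ▸ this]
  have hlogs : Real.log lam = 2 * Real.log s := by
    rw [← hssq, Real.log_mul (by linarith) (by linarith)]; ring
  -- |T - log λ / 2| ≤ 1
  have habs : |T - Real.log lam / 2| ≤ 1 := by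
    rw [abs_le]
    constructor
    · -- log λ/2 - T ≤ 1
      have hA : Real.log (lam - (M : ℝ)) ≤ Real.log (s + 1) :=
        Real.log_le_log (by linarith) h2
      have hB : Real.log lam ≤ Real.log (lam + 1) :=
        Real.log_le_log hlam0 (by linarith)
      have hC : Real.log (s + 1) - Real.log s ≤ 1 := by
        have := log_sub_log_le' (by linarith : (0:ℝ) < s) (by linarith : s ≤ s + 1)
        have h1s : (s + 1 - s) / s ≤ 1 := by
          rw [div_le_one (by linarith)]; linarith
        linarith
      have := hTge
      simp only [Nat.cast_add, Nat.cast_ofNat, Nat.cast_zero, Nat.cast_one] at this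
      have hMc : lam + 1 - ((M : ℝ) + 1) = lam - M := by ring
      rw [hMc] at this
      have : Real.log (lam + 1) - Real.log (lam - (M : ℝ)) ≤ T := by
        convert this using 3; push_cast; ring
      linarith [hlogs]
    · -- T - log λ/2 ≤ 1
      have hb1 : (1 : ℝ) ≤ s - 1 := by linarith
      have hA : Real.log (s - 1) ≤ Real.log (lam - ((M : ℝ) + 1)) :=
        Real.log_le_log (by linarith) (by linarith)
      have hC : Real.log s - Real.log (s - 1) ≤ 1 := by
        have := log_sub_log_le' (by linarith : (0:ℝ) < s - 1) (by linarith : s - 1 ≤ s)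
        have h1s : (s - (s - 1)) / (s - 1) ≤ 1 := by
          rw [div_le_one (by linarith)]; linarith
        linarith
      have hTle' : T ≤ Real.log lam - Real.log (lam - ((M : ℝ) + 1)) := by
        convert hTle using 3; push_cast; ring
      linarith [hlogs]
  -- the error sum
  set S : ℝ := ∑ l ∈ Finset.range (M + 1), (l : ℝ) ^ n / (lam - (l : ℝ)) with hSdef
  have hkey : S - lam ^ n * T
      = -∑ l ∈ Finset.range (M + 1), (lam ^ n - (l : ℝ) ^ n) / (lam - (l : ℝ)) := by
    rw [hSdef, hTdef, Finset.mul_sum, ← Finset.sum_sub_distrib, ← Finset.sum_neg_distrib]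
    refine Finset.sum_congr rfl fun l hl => ?_
    have : s ≤ lam - (l : ℝ) := hterm l hl
    field_simp
    ring
  have hEnonneg : 0 ≤ ∑ l ∈ Finset.range (M + 1), (lam ^ n - (l : ℝ) ^ n) / (lam - (l : ℝ)) := by
    refine Finset.sum_nonneg fun l hl => ?_
    have hl1 : s ≤ lam - (l : ℝ) := hterm l hl
    have hln : (l : ℝ) ^ n ≤ lam ^ n :=
      pow_le_pow_left₀ (Nat.cast_nonneg l) (by linarith) n
    exact div_nonneg (by linarith) (by linarith)
  have hEle : ∑ l ∈ Finset.range (M + 1), (lam ^ n - (l : ℝ) ^ n) / (lam - (l : ℝ))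
      ≤ n * lam ^ n := by
    rcases n with _ | m
    · simp
    · have hper : ∀ l ∈ Finset.range (M + 1),
          (lam ^ (m + 1) - (l : ℝ) ^ (m + 1)) / (lam - (l : ℝ)) ≤ (m + 1) * lam ^ m := by
        intro l hl
        have hl1 : s ≤ lam - (l : ℝ) := hterm l hl
        have hpos : (0 : ℝ) < lam - (l : ℝ) := by linarith
        rw [div_le_iff₀ hpos]
        exact pow_sub_pow_le_aux m (Nat.cast_nonneg l) (by linarith)
      calc ∑ l ∈ Finset.range (M + 1), (lam ^ (m + 1) - (l : ℝ) ^ (m + 1)) / (lam - (l : ℝ))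
          ≤ ∑ _l ∈ Finset.range (M + 1), (m + 1 : ℝ) * lam ^ m :=
            Finset.sum_le_sum hper
        _ = (M + 1 : ℝ) * ((m + 1 : ℝ) * lam ^ m) := by
            rw [Finset.sum_const, Finset.card_range]; push_cast; ring
        _ ≤ lam * ((m + 1 : ℝ) * lam ^ m) := by
            have hMlam : (M : ℝ) + 1 ≤ lam := by linarith
            have : (0 : ℝ) ≤ (m + 1 : ℝ) * lam ^ m := by positivity
            nlinarith
        _ = (m + 1 : ℕ) * lam ^ (m + 1) := by push_cast; ring
  -- assemble
  have hpow : (0 : ℝ) < lam ^ n := pow_pos hlam0 n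
  have hsplit : S - lam ^ n * Real.log lam / 2
      = (S - lam ^ n * T) + lam ^ n * (T - Real.log lam / 2) := by ring
  rw [hsplit]
  calc |(S - lam ^ n * T) + lam ^ n * (T - Real.log lam / 2)|
      ≤ |S - lam ^ n * T| + |lam ^ n * (T - Real.log lam / 2)| := abs_add_le _ _
    _ ≤ n * lam ^ n + lam ^ n * 1 := by
        gcongr ?_ + ?_
        · rw [hkey, abs_neg, abs_of_nonneg hEnonneg]; exact hEle
        · rw [abs_mul, abs_of_pos hpow]
          exact mul_le_mul_of_nonneg_left habs hpow.le
    _ = (n + 1 : ℝ) * lam ^ n := by ring
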